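/- Let ṽ be a simple game on n players with corresponding monotone (2,2) game v, and let p : {1,2}^n → [0,1] be a probability distribution such that p(a) depends only on the number of coordinates of a equal to 2. Then for each player i, the Shapley-Shubik index φ̃_i(ṽ) = (1/n!)·∑_{S ⊆ N∖{i}} |S|!·(n−1−|S|)!·(ṽ(S∪{i})−ṽ(S)) equals (1/n!)·∑_{(π,a)} p(a)·[(v̄_{π,p-1}(a) − v̲_{π,p-1}(a)) − (v̄_{π,p}(a) − v̲_{π,p}(a))], the expected probability that player i is pivotal in the roll-call model, where p = π^{-1}(i) and the sum is over all permutations π and all a ∈ {1,2}^n. -/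

import Mathlib

open Finset

/-- Votes `{1,2}` encoded as `Fin 2` (`1 ↦ 0`, `2 ↦ 1`). Maximal extension. -/
def vbar {n : ℕ} (v : (Fin n → Fin 2) → Fin 2) (π : Equiv.Perm (Fin n))
    (a : Fin n → Fin 2) (h : ℕ) : Fin 2 :=
  v (fun l => if (π l : ℕ) < h then a l else 1)

/-- Minimal extension. -/
def vbot {n : ℕ} (v : (Fin n → Fin 2) → Fin 2) (π : Equiv.Perm (Fin n))
    (a : Fin n → Fin 2) (h : ℕ) : Fin 2 :=
  v (fun l => if (π l : ℕ) < h then a l else 0)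

/-- Characteristic vector of a coalition `S` ("yes" = `1 : Fin 2`). -/
def charVec {n : ℕ} (S : Finset (Fin n)) : Fin n → Fin 2 :=
  fun l => if l ∈ S then 1 else 0

lemma hs_aux (M r : ℕ) : ∑ y ∈ range M, y.choose r = M.choose (r+1) := by
  induction M with
  | zero => simp
  | succ M ih =>
      rw [sum_range_succ, ih, Nat.choose_succ_succ M r]
      exact Nat.add_comm _ _

lemma hsv (M : ℕ) : ∀ p r : ℕ, ∑ x ∈ range (M+1), x.choose p * (M-x).choose r
    = (M+1).choose (p+r+1) := by
  induction M with
  | zero =>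
      intro p r
      rcases p with _|p
      · simp
        rcases r with _|r
        · simp
        · rw [Nat.choose_eq_zero_of_lt (show 0 < r+1 by omega),
            Nat.choose_eq_zero_of_lt (show 1 < r+1+1 by omega)]
      · simp [Nat.choose_eq_zero_of_lt (show 0 < p+1 by omega),
          Nat.choose_eq_zero_of_lt (show 1 < p+1+r+1 by omega)]
  | succ M ih =>
      intro p r
      rcases p with _|p
      · simp only [Nat.choose_zero_right, one_mul]
        calc ∑ x ∈ range (M+2), (M+1-x).choose r
            = ∑ x ∈ range (M+2), (M+2-1-x).choose r := by norm_num
          _ = ∑ y ∈ range (M+2), y.choose r := sum_range_reflect (fun y => y.choose r) (M+2)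
          _ = (M+2).choose (r+1) := hs_aux _ _
          _ = (M+1+1).choose (0+r+1) := by norm_num
      · rw [sum_range_succ' (fun x => x.choose (p+1) * (M+1-x).choose r) (M+1)]
        have e1 : ∀ x ∈ range (M+1), (x+1).choose (p+1) * (M+1-(x+1)).choose r
            = x.choose p * (M-x).choose r + x.choose (p+1) * (M-x).choose r := by
          intro x _
          rw [Nat.choose_succ_succ x p, Nat.succ_sub_succ, add_mul]
        rw [Finset.sum_congr rfl e1, Finset.sum_add_distrib, ih p r, ih (p+1) r]
        have harg : p+1+r+1 = (p+r+1)+1 := by omega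
        rw [harg, Nat.choose_succ_succ (M+1) (p+r+1)]
        simp

lemma hsv2 (s b t : ℕ) : ∑ j ∈ range (b+1), (s+j).choose s * (b-j).choose t
    = (s+b+1).choose (s+1+t) := by
  have h := hsv (s+b) s t
  rw [show s+b+1 = s+(b+1) by omega] at h
  rw [Finset.sum_range_add (fun x => x.choose s * (s+b-x).choose t) s (b+1)] at h
  have h0 : ∑ x ∈ range s, x.choose s * (s+b-x).choose t = 0 := by
    apply Finset.sum_eq_zero
    intro x hx
    rw [Nat.choose_eq_zero_of_lt (mem_range.mp hx)]
    ring
  rw [h0, zero_add] at h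
  have e : ∀ j ∈ range (b+1), (s+j).choose s * (s+b-(s+j)).choose t
      = (s+j).choose s * (b-j).choose t := by
    intro j _
    congr 2
    omega
  rw [Finset.sum_congr rfl e] at h
  rw [h]
  congr 1
  omega

lemma idA (s b t : ℕ) : ∑ j ∈ range (b+1),
    b.choose j * ((s+j).factorial * ((b-j).factorial * (b-j).choose t))
    = s.factorial * (b.factorial * (s+b+1).choose (s+1+t)) := by
  have step : ∀ j ∈ range (b+1), b.choose j * ((s+j).factorial * ((b-j).factorial * (b-j).choose t))
      = s.factorial * b.factorial * ((s+j).choose s * (b-j).choose t) := by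
    intro j hj
    have hjb : j ≤ b := by have := mem_range.mp hj; omega
    have h1 : b.choose j * j.factorial * (b-j).factorial = b.factorial :=
      Nat.choose_mul_factorial_mul_factorial hjb
    have h2 : (s+j).choose s * s.factorial * j.factorial = (s+j).factorial := by
      have := Nat.choose_mul_factorial_mul_factorial (show s ≤ s + j by omega)
      simpa [Nat.add_sub_cancel_left] using this
    have hjf : 0 < j.factorial := Nat.factorial_pos j
    apply Nat.eq_of_mul_eq_mul_right hjf
    calc b.choose j * ((s+j).factorial * ((b-j).factorial * (b-j).choose t)) * j.factorial
        = ((s+j).choose s * s.factorial * j.factorial) * (b.choose j * j.factorial * (b-j).factorial) * (b-j).choose t := by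
          rw [h2]; ring
      _ = ((s+j).choose s * s.factorial * j.factorial) * b.factorial * (b-j).choose t := by rw [h1]
      _ = s.factorial * b.factorial * ((s+j).choose s * (b-j).choose t) * j.factorial := by ring
  rw [Finset.sum_congr rfl step, ← Finset.mul_sum, hsv2, mul_assoc]

lemma idB (u s k : ℕ) (hsu : s ≤ u) : ∑ m ∈ range (s+1),
    (if s - m ≤ k then s.choose m * ((u-m).factorial * (m.factorial * m.choose (k-(s-m)))) else 0)
    = if k ≤ s then s.factorial * ((u-s).factorial * (u+1).choose k) else 0 := by
  by_cases hk : k ≤ s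
  · rw [if_pos hk]
    have step : ∀ m ∈ range (s+1),
        (if s - m ≤ k then s.choose m * ((u-m).factorial * (m.factorial * m.choose (k-(s-m)))) else 0)
        = s.factorial * (u-s).factorial * ((u-m).choose (u-s) * m.choose (s-k)) := by
      intro m hm
      have hms : m ≤ s := by have := mem_range.mp hm; omega
      by_cases hg : s - m ≤ k
      · rw [if_pos hg]
        have harg : k - (s-m) = m - (s-k) := by omega
        have hsym : m.choose (m - (s-k)) = m.choose (s-k) := Nat.choose_symm (by omega)
        have h1 : s.choose m * m.factorial * (s-m).factorial = s.factorial :=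
          Nat.choose_mul_factorial_mul_factorial hms
        have h2 : (u-m).choose (u-s) * (u-s).factorial * (s-m).factorial = (u-m).factorial := by
          have := Nat.choose_mul_factorial_mul_factorial (show u-s ≤ u-m by omega)
          rw [show u-m-(u-s) = s-m by omega] at this
          exact this
        have hf : 0 < (s-m).factorial := Nat.factorial_pos _
        apply Nat.eq_of_mul_eq_mul_right hf
        calc s.choose m * ((u-m).factorial * (m.factorial * m.choose (k-(s-m)))) * (s-m).factorial
            = (s.choose m * m.factorial * (s-m).factorial) * (u-m).factorial * m.choose (k-(s-m)) := by ring
          _ = s.factorial * ((u-m).choose (u-s) * (u-s).factorial * (s-m).factorial) * m.choose (k-(s-m)) := by rw [h1, h2]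
          _ = s.factorial * (u-s).factorial * ((u-m).choose (u-s) * m.choose (s-k)) * (s-m).factorial := by
              rw [harg, hsym]; ring
      · rw [if_neg hg]
        have : m.choose (s-k) = 0 := Nat.choose_eq_zero_of_lt (by omega)
        rw [this]
        ring
    rw [Finset.sum_congr rfl step, ← Finset.mul_sum]
    have hext : ∑ m ∈ range (s+1), (u-m).choose (u-s) * m.choose (s-k)
        = ∑ m ∈ range (u+1), (u-m).choose (u-s) * m.choose (s-k) := by
      apply Finset.sum_subset (Finset.range_subset_range.mpr (by omega))
      intro m hmu hm
      have h1 := mem_range.mp hmu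
      have h2 : ¬ m < s+1 := fun h => hm (mem_range.mpr h)
      rw [Nat.choose_eq_zero_of_lt (show u - m < u - s by omega), zero_mul]
    rw [hext]
    have hrefl : ∑ m ∈ range (u+1), (u-m).choose (u-s) * m.choose (s-k)
        = ∑ m ∈ range (u+1), m.choose (u-s) * (u-m).choose (s-k) := by
      rw [← sum_range_reflect (fun j => j.choose (u-s) * (u-j).choose (s-k)) (u+1)]
      apply Finset.sum_congr rfl
      intro m hm
      have hmu := mem_range.mp hm
      show (u-m).choose (u-s) * m.choose (s-k)
          = (u+1-1-m).choose (u-s) * (u-(u+1-1-m)).choose (s-k)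
      rw [show u+1-1-m = u-m by omega, show u-(u-m) = m by omega]
    rw [hrefl, hsv u (u-s) (s-k), show (u-s)+(s-k)+1 = (u+1)-k by omega,
      Nat.choose_symm (show k ≤ u+1 by omega)]
    ring
  · rw [if_neg hk]
    apply Finset.sum_eq_zero
    intro m hm
    have hms : m ≤ s := by have := mem_range.mp hm; omega
    by_cases hg : s - m ≤ k
    · rw [if_pos hg, Nat.choose_eq_zero_of_lt (show m < k - (s-m) by omega)]
      ring
    · rw [if_neg hg]
lemma sum_shift (c B : ℕ) (g : ℕ → ℝ) :
    ∑ t ∈ range B, g (c+t) = ∑ k ∈ range (c+B), if c ≤ k then g k else 0 := by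
  rw [Finset.sum_range_add (fun k => if c ≤ k then g k else 0) c B]
  have h1 : ∑ k ∈ range c, (if c ≤ k then g k else 0) = 0 := by
    apply Finset.sum_eq_zero
    intro k hk
    rw [if_neg (by have := mem_range.mp hk; omega)]
  have h2 : ∀ t ∈ range B, (if c ≤ c+t then g (c+t) else 0) = g (c+t) := by
    intro t _
    rw [if_pos (by omega)]
  rw [h1, zero_add, Finset.sum_congr rfl h2]

lemma key (u s : ℕ) (hsu : s ≤ u) (q : ℕ → ℝ) :
    (∑ j ∈ range (u-s+1), ((u-s).choose j : ℝ) * (s+j).factorial * (u-s-j).factorial *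
        ∑ t ∈ range (u-s-j+1), ((u-s-j).choose t : ℝ) * q (s+1+t))
    + (∑ m ∈ range (s+1), (s.choose m : ℝ) * (u-m).factorial * m.factorial *
        ∑ t ∈ range (m+1), (m.choose t : ℝ) * q (s-m+t))
    = (s.factorial : ℝ) * (u-s).factorial * ∑ k ∈ range (u+2), ((u+1).choose k : ℝ) * q k := by
  have hT1 : (∑ j ∈ range (u-s+1), ((u-s).choose j : ℝ) * (s+j).factorial * (u-s-j).factorial *
        ∑ t ∈ range (u-s-j+1), ((u-s-j).choose t : ℝ) * q (s+1+t))
      = ∑ k ∈ range (u+2), (if s+1 ≤ k then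
          ((s.factorial : ℝ) * (u-s).factorial * ((u+1).choose k)) * q k else 0) := by
    have step1 : ∀ j ∈ range (u-s+1),
        ((u-s).choose j : ℝ) * (s+j).factorial * (u-s-j).factorial *
          ∑ t ∈ range (u-s-j+1), ((u-s-j).choose t : ℝ) * q (s+1+t)
        = ∑ t ∈ range (u-s+1),
            (((u-s).choose j * ((s+j).factorial * ((u-s-j).factorial * (u-s-j).choose t)) : ℕ) : ℝ)
              * q (s+1+t) := by
      intro j hj
      rw [mul_sum]
      rw [Finset.sum_subset (Finset.range_subset_range.mpr
        (show u-s-j+1 ≤ u-s+1 by omega))]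
      · apply Finset.sum_congr rfl
        intro t _
        push_cast
        ring
      · intro t _ ht
        have h1 : u-s-j < t := by
          have h2 : ¬ t < u-s-j+1 := fun h => ht (mem_range.mpr h)
          omega
        rw [Nat.choose_eq_zero_of_lt h1]
        push_cast
        ring
    rw [Finset.sum_congr rfl step1, Finset.sum_comm]
    have step2 : ∀ t ∈ range (u-s+1),
        (∑ j ∈ range (u-s+1),
          (((u-s).choose j * ((s+j).factorial * ((u-s-j).factorial * (u-s-j).choose t)) : ℕ) : ℝ)
            * q (s+1+t))
        = ((s.factorial : ℝ) * (u-s).factorial * ((u+1).choose (s+1+t))) * q (s+1+t) := by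
      intro t _
      rw [← Finset.sum_mul, ← Nat.cast_sum, idA s (u-s) t,
        show s+(u-s)+1 = u+1 by omega]
      push_cast
      ring
    rw [Finset.sum_congr rfl step2]
    have := sum_shift (s+1) (u-s+1)
      (fun k => ((s.factorial : ℝ) * (u-s).factorial * ((u+1).choose k)) * q k)
    rw [show s+1+(u-s+1) = u+2 by omega] at this
    exact this
  have hT2 : (∑ m ∈ range (s+1), (s.choose m : ℝ) * (u-m).factorial * m.factorial *
        ∑ t ∈ range (m+1), (m.choose t : ℝ) * q (s-m+t))
      = ∑ k ∈ range (u+2), (if k ≤ s then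
          ((s.factorial : ℝ) * (u-s).factorial * ((u+1).choose k)) * q k else 0) := by
    have step1 : ∀ m ∈ range (s+1),
        (s.choose m : ℝ) * (u-m).factorial * m.factorial *
          ∑ t ∈ range (m+1), (m.choose t : ℝ) * q (s-m+t)
        = ∑ k ∈ range (s+1), (if s-m ≤ k then
            ((s.choose m * ((u-m).factorial * (m.factorial * m.choose (k-(s-m)))) : ℕ) : ℝ) * q k
            else 0) := by
      intro m hm
      have hms : m ≤ s := by have := mem_range.mp hm; omega
      rw [mul_sum]
      have inner : ∀ t ∈ range (m+1),
          (s.choose m : ℝ) * (u-m).factorial * m.factorial * ((m.choose t : ℝ) * q (s-m+t))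
          = (fun k => (((s.choose m * ((u-m).factorial * (m.factorial * m.choose (k-(s-m)))) : ℕ) : ℝ)) * q k) (s-m+t) := by
        intro t _
        show (s.choose m : ℝ) * (u-m).factorial * m.factorial * ((m.choose t : ℝ) * q (s-m+t))
          = (((s.choose m * ((u-m).factorial * (m.factorial * m.choose ((s-m+t)-(s-m)))) : ℕ) : ℝ)) * q (s-m+t)
        rw [show (s-m+t)-(s-m) = t by omega]
        push_cast
        ring
      rw [Finset.sum_congr rfl inner,
        sum_shift (s-m) (m+1) (fun k => (((s.choose m * ((u-m).factorial * (m.factorial * m.choose (k-(s-m)))) : ℕ) : ℝ)) * q k),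
        show s-m+(m+1) = s+1 by omega]
    rw [Finset.sum_congr rfl step1, Finset.sum_comm]
    have step2 : ∀ k ∈ range (s+1),
        (∑ m ∈ range (s+1), (if s-m ≤ k then
            ((s.choose m * ((u-m).factorial * (m.factorial * m.choose (k-(s-m)))) : ℕ) : ℝ) * q k
            else 0))
        = (if k ≤ s then ((s.factorial : ℝ) * (u-s).factorial * ((u+1).choose k)) * q k else 0) := by
      intro k hk
      have hks : k ≤ s := by have := mem_range.mp hk; omega
      rw [if_pos hks]
      have : ∀ m ∈ range (s+1), (if s-m ≤ k then
            ((s.choose m * ((u-m).factorial * (m.factorial * m.choose (k-(s-m)))) : ℕ) : ℝ) * q k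
            else 0)
          = (((if s-m ≤ k then s.choose m * ((u-m).factorial * (m.factorial * m.choose (k-(s-m)))) else 0 : ℕ) : ℝ)) * q k := by
        intro m _
        by_cases hg : s-m ≤ k
        · rw [if_pos hg, if_pos hg]
        · rw [if_neg hg, if_neg hg]
          push_cast
          ring
      rw [Finset.sum_congr rfl this, ← Finset.sum_mul, ← Nat.cast_sum, idB u s k hsu,
        if_pos hks]
      push_cast
      ring
    rw [Finset.sum_congr rfl step2]
    apply Finset.sum_subset (Finset.range_subset_range.mpr (by omega))
    intro k _ hk
    have h2 : ¬ k < s+1 := fun h => hk (mem_range.mpr h)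
    rw [if_neg (show ¬ k ≤ s by omega)]
  rw [hT1, hT2, ← Finset.sum_add_distrib, Finset.mul_sum]
  apply Finset.sum_congr rfl
  intro k _
  by_cases hg : s+1 ≤ k
  · rw [if_pos hg, if_neg (by omega), add_zero]
    ring
  · rw [if_neg hg, if_pos (by omega), zero_add]
    ring
lemma card_filter_lt (n h : ℕ) (hn : h ≤ n) :
    ((univ : Finset (Fin n)).filter (fun m : Fin n => (m : ℕ) < h)).card = h := by
  rw [← Fintype.card_subtype]
  have e : {m : Fin n // (m : ℕ) < h} ≃ Fin h :=
    { toFun := fun m => ⟨m.1, m.2⟩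
      invFun := fun x => ⟨⟨x.1, lt_of_lt_of_le x.2 hn⟩, x.2⟩
      left_inv := fun m => Subtype.ext (Fin.ext rfl)
      right_inv := fun x => Fin.ext rfl }
  rw [Fintype.card_congr e, Fintype.card_fin]

lemma card_filter_gt (n c : ℕ) (hc : c < n) :
    ((univ : Finset (Fin n)).filter (fun m : Fin n => c < (m : ℕ))).card = n - 1 - c := by
  have h1 : (univ : Finset (Fin n)).filter (fun m : Fin n => c < (m : ℕ))
      = (univ : Finset (Fin n)).filter (fun m : Fin n => ¬ ((m : ℕ) < c + 1)) := by
    apply Finset.filter_congr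
    intro m _
    constructor
    · intro h; omega
    · intro h; omega
  rw [h1, Finset.filter_not, Finset.card_sdiff_of_subset (Finset.filter_subset _ _),
    card_filter_lt n (c+1) (by omega)]
  simp [Finset.card_univ]
  omega

lemma perm_filter_lt_card {n : ℕ} (π : Equiv.Perm (Fin n)) (h : ℕ) (hn : h ≤ n) :
    ((univ : Finset (Fin n)).filter (fun l => (π l : ℕ) < h)).card = h := by
  have heq : ((univ : Finset (Fin n)).filter (fun l => (π l : ℕ) < h)).card
      = ((univ : Finset (Fin n)).filter (fun m : Fin n => (m : ℕ) < h)).card := by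
    apply Finset.card_nbij (fun l => π l)
    · intro l hl
      simp only [Finset.coe_filter, Finset.mem_univ, true_and, Set.mem_setOf_eq] at hl ⊢
      exact hl
    · intro x _ y _ hxy
      exact π.injective hxy
    · intro m hm
      simp only [Finset.coe_filter, Finset.mem_univ, true_and, Set.mem_setOf_eq] at hm ⊢
      exact ⟨π.symm m, by simpa using hm, by simp⟩
  rw [heq, card_filter_lt n h hn]


def glueFun {n : ℕ} (i : Fin n) (E : Finset (Fin n)) (c : ℕ) (hcn : c < n)
    (e1 : {l : Fin n // l ∈ E} ≃ {m : Fin n // (m : ℕ) < c})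
    (e2 : {l : Fin n // l ∉ insert i E} ≃ {m : Fin n // c < (m : ℕ)}) :
    Fin n → Fin n := fun x =>
  if h1 : x ∈ E then ((e1 ⟨x, h1⟩ : {m : Fin n // (m : ℕ) < c}) : Fin n)
  else if h2 : x = i then ⟨c, hcn⟩
  else ((e2 ⟨x, fun hmem => (Finset.mem_insert.mp hmem).elim h2 h1⟩ :
    {m : Fin n // c < (m : ℕ)}) : Fin n)

lemma glueFun_mem {n : ℕ} (i : Fin n) (E : Finset (Fin n)) (c : ℕ) (hcn : c < n)
    (e1 : {l : Fin n // l ∈ E} ≃ {m : Fin n // (m : ℕ) < c})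
    (e2 : {l : Fin n // l ∉ insert i E} ≃ {m : Fin n // c < (m : ℕ)})
    (x : Fin n) (h1 : x ∈ E) :
    glueFun i E c hcn e1 e2 x = ((e1 ⟨x, h1⟩ : {m : Fin n // (m : ℕ) < c}) : Fin n) := by
  unfold glueFun
  rw [dif_pos h1]

lemma glueFun_at_i {n : ℕ} (i : Fin n) (E : Finset (Fin n))
    (c : ℕ) (hcn : c < n) (hiE : i ∉ E)
    {e1 : {l : Fin n // l ∈ E} ≃ {m : Fin n // (m : ℕ) < c}}
    {e2 : {l : Fin n // l ∉ insert i E} ≃ {m : Fin n // c < (m : ℕ)}} :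
    glueFun i E c hcn e1 e2 i = ⟨c, hcn⟩ := by
  unfold glueFun
  rw [dif_neg hiE, dif_pos rfl]

lemma glueFun_not_mem {n : ℕ} (i : Fin n) (E : Finset (Fin n)) (c : ℕ) (hcn : c < n)
    (e1 : {l : Fin n // l ∈ E} ≃ {m : Fin n // (m : ℕ) < c})
    (e2 : {l : Fin n // l ∉ insert i E} ≃ {m : Fin n // c < (m : ℕ)})
    (x : Fin n) (h1 : x ∉ E) (h2 : x ≠ i) :
    glueFun i E c hcn e1 e2 x = ((e2 ⟨x, fun hmem => (Finset.mem_insert.mp hmem).elim h2 h1⟩ :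
      {m : Fin n // c < (m : ℕ)}) : Fin n) := by
  unfold glueFun
  rw [dif_neg h1, dif_neg h2]

lemma glueFun_inj {n : ℕ} (i : Fin n) (E : Finset (Fin n)) (c : ℕ) (hcn : c < n) (hiE : i ∉ E)
    (e1 : {l : Fin n // l ∈ E} ≃ {m : Fin n // (m : ℕ) < c})
    (e2 : {l : Fin n // l ∉ insert i E} ≃ {m : Fin n // c < (m : ℕ)}) :
    Function.Injective (glueFun i E c hcn e1 e2) := by
  intro x y hxy
  by_cases hx1 : x ∈ E <;> by_cases hy1 : y ∈ E
  · rw [glueFun_mem i E c hcn e1 e2 x hx1, glueFun_mem i E c hcn e1 e2 y hy1] at hxy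
    have := e1.injective (Subtype.ext hxy)
    exact congrArg Subtype.val this
  · exfalso
    rw [glueFun_mem i E c hcn e1 e2 x hx1] at hxy
    have hvx : ((e1 ⟨x, hx1⟩ : {m : Fin n // (m : ℕ) < c}) : Fin n).val < c := (e1 ⟨x, hx1⟩).2
    by_cases hy2 : y = i
    · rw [hy2, glueFun_at_i i E c hcn hiE] at hxy
      rw [hxy] at hvx
      simp at hvx
    · rw [glueFun_not_mem i E c hcn e1 e2 y hy1 hy2] at hxy
      have hvy : c < ((e2 ⟨y, _⟩ : {m : Fin n // c < (m : ℕ)}) : Fin n).val :=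
        (e2 ⟨y, fun hmem => (Finset.mem_insert.mp hmem).elim hy2 hy1⟩).2
      rw [hxy] at hvx
      omega
  · exfalso
    rw [glueFun_mem i E c hcn e1 e2 y hy1] at hxy
    have hvy : ((e1 ⟨y, hy1⟩ : {m : Fin n // (m : ℕ) < c}) : Fin n).val < c := (e1 ⟨y, hy1⟩).2
    by_cases hx2 : x = i
    · rw [hx2, glueFun_at_i i E c hcn hiE] at hxy
      rw [← hxy] at hvy
      simp at hvy
    · rw [glueFun_not_mem i E c hcn e1 e2 x hx1 hx2] at hxy
      have hvx : c < ((e2 ⟨x, _⟩ : {m : Fin n // c < (m : ℕ)}) : Fin n).val :=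
        (e2 ⟨x, fun hmem => (Finset.mem_insert.mp hmem).elim hx2 hx1⟩).2
      rw [← hxy] at hvy
      omega
  · by_cases hx2 : x = i <;> by_cases hy2 : y = i
    · rw [hx2, hy2]
    · exfalso
      rw [hx2, glueFun_at_i i E c hcn hiE, glueFun_not_mem i E c hcn e1 e2 y hy1 hy2] at hxy
      have hvy : c < ((e2 ⟨y, _⟩ : {m : Fin n // c < (m : ℕ)}) : Fin n).val :=
        (e2 ⟨y, fun hmem => (Finset.mem_insert.mp hmem).elim hy2 hy1⟩).2
      rw [← hxy] at hvy
      simp at hvy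
    · exfalso
      rw [hy2, glueFun_at_i i E c hcn hiE, glueFun_not_mem i E c hcn e1 e2 x hx1 hx2] at hxy
      have hvx : c < ((e2 ⟨x, _⟩ : {m : Fin n // c < (m : ℕ)}) : Fin n).val :=
        (e2 ⟨x, fun hmem => (Finset.mem_insert.mp hmem).elim hx2 hx1⟩).2
      rw [hxy] at hvx
      simp at hvx
    · rw [glueFun_not_mem i E c hcn e1 e2 x hx1 hx2,
        glueFun_not_mem i E c hcn e1 e2 y hy1 hy2] at hxy
      have := e2.injective (Subtype.ext hxy)
      exact congrArg Subtype.val this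

lemma perm_count {n : ℕ} (i : Fin n) (E : Finset (Fin n)) (hiE : i ∉ E) :
    ((univ : Finset (Equiv.Perm (Fin n))).filter
      (fun π => univ.filter (fun l => (π l : ℕ) < (π i : ℕ)) = E)).card
    = E.card.factorial * (n - 1 - E.card).factorial := by
  set c := E.card with hc
  have hn : 0 < n := i.pos
  have hcn : c < n := by
    have : E ⊆ univ.erase i := fun l hl => Finset.mem_erase.mpr
      ⟨fun h => hiE (h ▸ hl), Finset.mem_univ l⟩
    have h1 := Finset.card_le_card this
    rw [Finset.card_erase_of_mem (Finset.mem_univ i), Finset.card_univ, Fintype.card_fin] at h1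
    omega
  -- Step A : rewrite the filter condition
  have stepA : ∀ π : Equiv.Perm (Fin n),
      (univ.filter (fun l => (π l : ℕ) < (π i : ℕ)) = E) ↔
      ((π i : ℕ) = c ∧ ∀ l ∈ E, (π l : ℕ) < c) := by
    intro π
    constructor
    · intro hfil
      have hcard : (univ.filter (fun l => (π l : ℕ) < (π i : ℕ))).card = (π i : ℕ) :=
        perm_filter_lt_card π (π i) (le_of_lt (π i).2)
      rw [hfil] at hcard
      refine ⟨hcard.symm, fun l hl => ?_⟩
      rw [← hfil] at hl
      have := (Finset.mem_filter.mp hl).2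
      omega
    · rintro ⟨hpi, hlt⟩
      have hsub : E ⊆ univ.filter (fun l => (π l : ℕ) < (π i : ℕ)) := by
        intro l hl
        exact Finset.mem_filter.mpr ⟨Finset.mem_univ l, by rw [hpi]; exact hlt l hl⟩
      have hcard : (univ.filter (fun l => (π l : ℕ) < (π i : ℕ))).card = c := by
        rw [perm_filter_lt_card π (π i) (le_of_lt (π i).2)]; exact hpi
      exact (Finset.eq_of_subset_of_card_le hsub (le_of_eq hcard)).symm
  rw [Finset.filter_congr (fun π _ => stepA π)]
  -- Step B : count permutations with property Q
  rw [← Fintype.card_subtype]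
  have q1 : ∀ (π : Equiv.Perm (Fin n)), ((π i : ℕ) = c ∧ ∀ l ∈ E, (π l : ℕ) < c) →
      ∀ l, l ∈ E ↔ (π l : ℕ) < c := by
    intro π hπ l
    have hfil := (stepA π).mpr hπ
    constructor
    · intro hl; exact hπ.2 l hl
    · intro hl
      rw [← hfil]
      have h1 := hπ.1
      exact Finset.mem_filter.mpr ⟨Finset.mem_univ l, by omega⟩
  have q2 : ∀ (π : Equiv.Perm (Fin n)), ((π i : ℕ) = c ∧ ∀ l ∈ E, (π l : ℕ) < c) →
      ∀ l, l ∉ insert i E ↔ c < (π l : ℕ) := by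
    intro π hπ l
    have h1 := hπ.1
    constructor
    · intro hl
      have hli : l ≠ i := fun h => hl (h ▸ Finset.mem_insert_self i E)
      have hlE : l ∉ E := fun h => hl (Finset.mem_insert_of_mem h)
      have hne : (π l : ℕ) ≠ c := by
        intro h
        apply hli
        apply π.injective
        apply Fin.ext
        rw [h, h1]
      have hge : ¬ (π l : ℕ) < c := fun h => hlE ((q1 π hπ l).mpr h)
      omega
    · intro hl hmem
      rcases Finset.mem_insert.mp hmem with h | h
      · rw [h] at hl; omega
      · have := hπ.2 l h; omega
  -- the explicit bijection
  have main : Fintype.card {π : Equiv.Perm (Fin n) // (π i : ℕ) = c ∧ ∀ l ∈ E, (π l : ℕ) < c}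
      = Fintype.card (({l : Fin n // l ∈ E} ≃ {m : Fin n // (m : ℕ) < c}) ×
          ({l : Fin n // l ∉ insert i E} ≃ {m : Fin n // c < (m : ℕ)})) := by
    apply Fintype.card_congr
    refine
      { toFun := fun π => (Equiv.subtypeEquiv π.1 (q1 π.1 π.2), Equiv.subtypeEquiv π.1 (q2 π.1 π.2))
        invFun := fun e => ⟨Equiv.ofBijective (glueFun i E c hcn e.1 e.2)
          ((Finite.injective_iff_bijective).mp (glueFun_inj i E c hcn hiE e.1 e.2)), ?_, ?_⟩
        left_inv := ?_
        right_inv := ?_ }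
    · show ((glueFun i E c hcn e.1 e.2) i : ℕ) = c
      rw [glueFun_at_i i E c hcn hiE]
    · intro l hl
      show ((glueFun i E c hcn e.1 e.2) l : ℕ) < c
      rw [glueFun_mem i E c hcn e.1 e.2 l hl]
      exact (e.1 ⟨l, hl⟩).2
    · rintro ⟨π, hπ⟩
      apply Subtype.ext
      apply Equiv.ext
      intro x
      show glueFun i E c hcn _ _ x = π x
      by_cases h1 : x ∈ E
      · rw [glueFun_mem i E c hcn _ _ x h1]
        rfl
      · by_cases h2 : x = i
        · rw [h2, glueFun_at_i i E c hcn hiE]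
          exact Fin.ext hπ.1.symm
        · rw [glueFun_not_mem i E c hcn _ _ x h1 h2]
          rfl
    · rintro ⟨e1, e2⟩
      have hg := (Finite.injective_iff_bijective).mp (glueFun_inj i E c hcn hiE e1 e2)
      apply Prod.ext
      · apply Equiv.ext
        rintro ⟨x, hx⟩
        apply Subtype.ext
        show (Equiv.ofBijective (glueFun i E c hcn e1 e2) hg) x = ((e1 ⟨x, hx⟩ : {m : Fin n // (m : ℕ) < c}) : Fin n)
        show glueFun i E c hcn e1 e2 x = _
        rw [glueFun_mem i E c hcn e1 e2 x hx]
      · apply Equiv.ext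
        rintro ⟨x, hx⟩
        apply Subtype.ext
        show (Equiv.ofBijective (glueFun i E c hcn e1 e2) hg) x = ((e2 ⟨x, hx⟩ : {m : Fin n // c < (m : ℕ)}) : Fin n)
        show glueFun i E c hcn e1 e2 x = _
        have h1 : x ∉ E := fun h => hx (Finset.mem_insert_of_mem h)
        have h2 : x ≠ i := fun h => hx (h ▸ Finset.mem_insert_self i E)
        rw [glueFun_not_mem i E c hcn e1 e2 x h1 h2]
  rw [main, Fintype.card_prod]
  have c2 : Fintype.card {l : Fin n // l ∈ E} = c := Fintype.card_coe E
  have c1 : Fintype.card {m : Fin n // (m : ℕ) < c} = c := by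
    rw [Fintype.card_subtype]
    exact card_filter_lt n c (le_of_lt hcn)
  have c3 : Fintype.card {m : Fin n // c < (m : ℕ)} = n - 1 - c := by
    rw [Fintype.card_subtype]
    exact card_filter_gt n c hcn
  have c4 : Fintype.card {l : Fin n // l ∉ insert i E} = n - 1 - c := by
    have := Fintype.card_subtype_compl (fun l : Fin n => l ∈ insert i E)
    rw [Fintype.card_fin] at this
    have hins : Fintype.card {l : Fin n // l ∈ insert i E} = c + 1 := by
      rw [Fintype.card_coe, Finset.card_insert_of_notMem hiE]
    rw [this, hins]
    omega
  rw [Fintype.card_equiv (Fintype.equivOfCardEq (c2.trans c1.symm)),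
    Fintype.card_equiv (Fintype.equivOfCardEq (c4.trans c3.symm)), c2, c4]
lemma sum_powerset_union_disj {α : Type*} [DecidableEq α] (E R : Finset α)
    (hd : Disjoint E R) (f : Finset α → ℝ) :
    ∑ T ∈ (E ∪ R).powerset, f T = ∑ A ∈ E.powerset, ∑ B ∈ R.powerset, f (A ∪ B) := by
  induction R using Finset.induction_on generalizing f with
  | empty => simp
  | @insert a R haR ih =>
      have haE : a ∉ E ∪ R := by
        intro h
        rcases Finset.mem_union.mp h with h | h
        · exact (Finset.disjoint_right.mp hd (Finset.mem_insert_self a R)) h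
        · exact haR h
      have hd' : Disjoint E R := hd.mono_right (Finset.subset_insert a R)
      rw [show E ∪ insert a R = insert a (E ∪ R) by
          rw [Finset.union_insert],
        Finset.sum_powerset_insert haE, ih hd' f, ih hd' (fun T => f (insert a T)),
        ← Finset.sum_add_distrib]
      apply Finset.sum_congr rfl
      intro A hA
      rw [Finset.sum_powerset_insert haR]
      congr 1
      apply Finset.sum_congr rfl
      intro B hB
      rw [Finset.union_insert]

lemma sum_supersets {α : Type*} [DecidableEq α] (U A : Finset α) (hA : A ⊆ U)
    (g : Finset α → ℝ) :
    ∑ E ∈ U.powerset.filter (fun E => A ⊆ E), g E = ∑ D ∈ (U \ A).powerset, g (A ∪ D) := by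
  apply Finset.sum_nbij' (fun E => E \ A) (fun D => A ∪ D)
  · intro E hE
    rw [Finset.mem_filter, Finset.mem_powerset] at hE
    exact Finset.mem_powerset.mpr (Finset.sdiff_subset_sdiff hE.1 Finset.Subset.rfl)
  · intro D hD
    rw [Finset.mem_powerset] at hD
    rw [Finset.mem_filter, Finset.mem_powerset]
    refine ⟨Finset.union_subset hA (hD.trans Finset.sdiff_subset), Finset.subset_union_left⟩
  · intro E hE
    rw [Finset.mem_filter] at hE
    exact Finset.union_sdiff_of_subset hE.2
  · intro D hD
    rw [Finset.mem_powerset] at hD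
    rw [Finset.union_sdiff_cancel_left (Finset.disjoint_left.mpr
      (fun x hxA hxD => (Finset.mem_sdiff.mp (hD hxD)).2 hxA))]
  · intro E hE
    rw [Finset.mem_filter] at hE
    rw [Finset.union_sdiff_of_subset hE.2]

lemma swap_powerset1 {α : Type*} [DecidableEq α] (U : Finset α) (f : Finset α → Finset α → ℝ) :
    ∑ E ∈ U.powerset, ∑ A ∈ E.powerset, f E A
    = ∑ A ∈ U.powerset, ∑ D ∈ (U \ A).powerset, f (A ∪ D) A := by
  have h1 : ∑ E ∈ U.powerset, ∑ A ∈ E.powerset, f E A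
      = ∑ A ∈ U.powerset, ∑ E ∈ U.powerset.filter (fun E => A ⊆ E), f E A := by
    apply Finset.sum_comm'
    intro E A
    simp only [Finset.mem_powerset, Finset.mem_filter]
    constructor
    · rintro ⟨h1, h2⟩
      exact ⟨⟨h1, h2⟩, h2.trans h1⟩
    · rintro ⟨⟨h1, h2⟩, h3⟩
      exact ⟨h1, h2⟩
  rw [h1]
  apply Finset.sum_congr rfl
  intro A hA
  exact sum_supersets U A (Finset.mem_powerset.mp hA) (fun E => f E A)

lemma swap_powerset2 {α : Type*} [DecidableEq α] (U : Finset α) (f : Finset α → Finset α → ℝ) :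
    ∑ E ∈ U.powerset, ∑ A ∈ E.powerset, f E A
    = ∑ S ∈ U.powerset, ∑ R' ∈ S.powerset, f (U \ R') (S \ R') := by
  rw [← Finset.sum_finset_product' ((U.powerset.sigma (fun E => E.powerset)).map
    (Equiv.sigmaEquivProd _ _).toEmbedding) U.powerset (fun E => E.powerset) (by
      intro p
      simp only [Finset.mem_map, Finset.mem_sigma, Finset.mem_powerset, Equiv.coe_toEmbedding,
        Equiv.sigmaEquivProd_apply]
      constructor
      · rintro ⟨⟨x1, x2⟩, ⟨hx1, hx2⟩, rfl⟩
        exact ⟨hx1, hx2⟩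
      · rintro ⟨h1, h2⟩
        exact ⟨⟨p.1, p.2⟩, ⟨h1, h2⟩, rfl⟩)]
  rw [← Finset.sum_finset_product' ((U.powerset.sigma (fun S => S.powerset)).map
    (Equiv.sigmaEquivProd _ _).toEmbedding) U.powerset (fun S => S.powerset) (by
      intro p
      simp only [Finset.mem_map, Finset.mem_sigma, Finset.mem_powerset, Equiv.coe_toEmbedding,
        Equiv.sigmaEquivProd_apply]
      constructor
      · rintro ⟨⟨x1, x2⟩, ⟨hx1, hx2⟩, rfl⟩
        exact ⟨hx1, hx2⟩
      · rintro ⟨h1, h2⟩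
        exact ⟨⟨p.1, p.2⟩, ⟨h1, h2⟩, rfl⟩)]
  apply Finset.sum_nbij' (fun p : Finset α × Finset α => (p.2 ∪ (U \ p.1), U \ p.1))
    (fun p : Finset α × Finset α => (U \ p.2, p.1 \ p.2))
  · intro p hp
    simp only [Finset.mem_map, Finset.mem_sigma, Finset.mem_powerset, Equiv.coe_toEmbedding,
      Equiv.sigmaEquivProd_apply] at hp ⊢
    obtain ⟨⟨E, A⟩, ⟨hE, hA⟩, rfl⟩ := hp
    refine ⟨⟨A ∪ (U \ E), U \ E⟩, ⟨?_, ?_⟩, rfl⟩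
    · exact Finset.union_subset (hA.trans hE) Finset.sdiff_subset
    · exact Finset.subset_union_right
  · intro p hp
    simp only [Finset.mem_map, Finset.mem_sigma, Finset.mem_powerset, Equiv.coe_toEmbedding,
      Equiv.sigmaEquivProd_apply] at hp ⊢
    obtain ⟨⟨S, R'⟩, ⟨hS, hR⟩, rfl⟩ := hp
    refine ⟨⟨U \ R', S \ R'⟩, ⟨Finset.sdiff_subset, ?_⟩, rfl⟩
    exact Finset.sdiff_subset_sdiff hS Finset.Subset.rfl
  · intro p hp
    simp only [Finset.mem_map, Finset.mem_sigma, Finset.mem_powerset, Equiv.coe_toEmbedding,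
      Equiv.sigmaEquivProd_apply] at hp
    obtain ⟨⟨E, A⟩, ⟨hE, hA⟩, rfl⟩ := hp
    have h1 : U \ (U \ E) = E := Finset.sdiff_sdiff_eq_self hE
    have h2 : (A ∪ (U \ E)) \ (U \ E) = A := by
      rw [Finset.union_sdiff_cancel_right]
      exact Finset.disjoint_left.mpr (fun x hxA hxD =>
        (Finset.mem_sdiff.mp hxD).2 (hA hxA))
    exact Prod.ext h1 h2
  · intro p hp
    simp only [Finset.mem_map, Finset.mem_sigma, Finset.mem_powerset, Equiv.coe_toEmbedding,
      Equiv.sigmaEquivProd_apply] at hp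
    obtain ⟨⟨S, R'⟩, ⟨hS, hR⟩, rfl⟩ := hp
    have h1 : U \ (U \ R') = R' := Finset.sdiff_sdiff_eq_self (hR.trans hS)
    have h2 : (S \ R') ∪ (U \ (U \ R')) = S := by
      rw [h1]
      exact Finset.sdiff_union_of_subset hR
    exact Prod.ext h2 h1
  · intro p hp
    simp only [Finset.mem_map, Finset.mem_sigma, Finset.mem_powerset, Equiv.coe_toEmbedding,
      Equiv.sigmaEquivProd_apply] at hp
    obtain ⟨⟨E, A⟩, ⟨hE, hA⟩, rfl⟩ := hp
    have h1 : U \ (U \ E) = E := Finset.sdiff_sdiff_eq_self hE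
    have h2 : (A ∪ (U \ E)) \ (U \ E) = A := by
      rw [Finset.union_sdiff_cancel_right]
      exact Finset.disjoint_left.mpr (fun x hxA hxD =>
        (Finset.mem_sdiff.mp hxD).2 (hA hxA))
    rw [h1, h2]

lemma sum_pow_card {α : Type*} (R : Finset α) (f : ℕ → ℝ) :
    ∑ B ∈ R.powerset, f B.card = ∑ j ∈ range (R.card + 1), (R.card.choose j : ℝ) * f j := by
  rw [Finset.sum_powerset]
  apply Finset.sum_congr rfl
  intro j hj
  have : ∀ B ∈ Finset.powersetCard j R, f B.card = f j := by
    intro B hB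
    rw [(Finset.mem_powersetCard.mp hB).2]
  rw [Finset.sum_congr rfl this, Finset.sum_const, Finset.card_powersetCard,
    nsmul_eq_mul]
def Epi {n : ℕ} (π : Equiv.Perm (Fin n)) (i : Fin n) : Finset (Fin n) :=
  univ.filter (fun l => (π l : ℕ) < (π i : ℕ))

def Rpi {n : ℕ} (π : Equiv.Perm (Fin n)) (i : Fin n) : Finset (Fin n) :=
  (univ.erase i) \ Epi π i

def gset {n : ℕ} (π : Equiv.Perm (Fin n)) (i : Fin n) (T : Finset (Fin n)) : Finset (Fin n) :=
  if i ∈ T then Epi π i ∩ T else (Epi π i ∩ T) ∪ Rpi π i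

lemma mem_Epi {n : ℕ} (π : Equiv.Perm (Fin n)) (i l : Fin n) :
    l ∈ Epi π i ↔ (π l : ℕ) < (π i : ℕ) := by
  simp [Epi]

lemma mem_Rpi {n : ℕ} (π : Equiv.Perm (Fin n)) (i l : Fin n) :
    l ∈ Rpi π i ↔ (π i : ℕ) < (π l : ℕ) := by
  rw [Rpi, Finset.mem_sdiff, Finset.mem_erase, mem_Epi]
  constructor
  · rintro ⟨⟨hne, -⟩, hnlt⟩
    have h1 : (π l : ℕ) ≠ (π i : ℕ) := fun h => hne (π.injective (Fin.ext h))
    omega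
  · intro h
    refine ⟨⟨fun he => ?_, Finset.mem_univ l⟩, by omega⟩
    rw [he] at h
    omega

lemma fa {n : ℕ} (π : Equiv.Perm (Fin n)) (i : Fin n) (T : Finset (Fin n)) :
    (fun l => if (π l : ℕ) < (π i : ℕ) then charVec T l else 1)
    = charVec (insert i ((Epi π i ∩ T) ∪ Rpi π i)) := by
  funext l
  by_cases hlt : (π l : ℕ) < (π i : ℕ)
  · rw [if_pos hlt]
    have hne : l ≠ i := by intro h; rw [h] at hlt; omega
    have hE : l ∈ Epi π i := (mem_Epi π i l).mpr hlt
    have hR : l ∉ Rpi π i := by rw [mem_Rpi]; omega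
    by_cases hT : l ∈ T
    · have hmem : l ∈ insert i ((Epi π i ∩ T) ∪ Rpi π i) :=
        Finset.mem_insert_of_mem (Finset.mem_union_left _ (Finset.mem_inter.mpr ⟨hE, hT⟩))
      simp [charVec, hT, hmem]
    · have hmem : l ∉ insert i ((Epi π i ∩ T) ∪ Rpi π i) := by
        intro h
        rcases Finset.mem_insert.mp h with h | h
        · exact hne h
        · rcases Finset.mem_union.mp h with h | h
          · exact hT (Finset.mem_inter.mp h).2
          · exact hR h
      simp [charVec, hT, hmem]
  · rw [if_neg hlt]
    have hmem : l ∈ insert i ((Epi π i ∩ T) ∪ Rpi π i) := by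
      by_cases hne : l = i
      · rw [hne]; exact Finset.mem_insert_self i _
      · apply Finset.mem_insert_of_mem
        apply Finset.mem_union_right
        rw [mem_Rpi]
        have h1 : (π l : ℕ) ≠ (π i : ℕ) := fun h => hne (π.injective (Fin.ext h))
        omega
    simp [charVec, hmem]

lemma fb {n : ℕ} (π : Equiv.Perm (Fin n)) (i : Fin n) (T : Finset (Fin n)) :
    (fun l => if (π l : ℕ) < (π i : ℕ) then charVec T l else 0)
    = charVec (Epi π i ∩ T) := by
  funext l
  by_cases hlt : (π l : ℕ) < (π i : ℕ)
  · rw [if_pos hlt]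
    have hE : l ∈ Epi π i := (mem_Epi π i l).mpr hlt
    by_cases hT : l ∈ T
    · have hmem : l ∈ Epi π i ∩ T := Finset.mem_inter.mpr ⟨hE, hT⟩
      simp [charVec, hT, hmem]
    · have hmem : l ∉ Epi π i ∩ T := fun h => hT (Finset.mem_inter.mp h).2
      simp [charVec, hT, hmem]
  · rw [if_neg hlt]
    have hE : l ∉ Epi π i := by rw [mem_Epi]; omega
    have hmem : l ∉ Epi π i ∩ T := fun h => hE (Finset.mem_inter.mp h).1
    simp [charVec, hmem]

lemma fc {n : ℕ} (π : Equiv.Perm (Fin n)) (i : Fin n) (T : Finset (Fin n)) :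
    (fun l => if (π l : ℕ) < (π i : ℕ) + 1 then charVec T l else 1)
    = charVec ((insert i (Epi π i) ∩ T) ∪ Rpi π i) := by
  funext l
  by_cases hlt : (π l : ℕ) < (π i : ℕ) + 1
  · rw [if_pos hlt]
    have hIE : l ∈ insert i (Epi π i) := by
      by_cases hne : l = i
      · rw [hne]; exact Finset.mem_insert_self i _
      · apply Finset.mem_insert_of_mem
        rw [mem_Epi]
        have h1 : (π l : ℕ) ≠ (π i : ℕ) := fun h => hne (π.injective (Fin.ext h))
        omega
    have hR : l ∉ Rpi π i := by rw [mem_Rpi]; omega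
    by_cases hT : l ∈ T
    · have hmem : l ∈ (insert i (Epi π i) ∩ T) ∪ Rpi π i :=
        Finset.mem_union_left _ (Finset.mem_inter.mpr ⟨hIE, hT⟩)
      simp [charVec, hT, hmem]
    · have hmem : l ∉ (insert i (Epi π i) ∩ T) ∪ Rpi π i := by
        intro h
        rcases Finset.mem_union.mp h with h | h
        · exact hT (Finset.mem_inter.mp h).2
        · exact hR h
      simp [charVec, hT, hmem]
  · rw [if_neg hlt]
    have hmem : l ∈ (insert i (Epi π i) ∩ T) ∪ Rpi π i := by
      apply Finset.mem_union_right
      rw [mem_Rpi]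
      omega
    simp [charVec, hmem]

lemma fd {n : ℕ} (π : Equiv.Perm (Fin n)) (i : Fin n) (T : Finset (Fin n)) :
    (fun l => if (π l : ℕ) < (π i : ℕ) + 1 then charVec T l else 0)
    = charVec (insert i (Epi π i) ∩ T) := by
  funext l
  by_cases hlt : (π l : ℕ) < (π i : ℕ) + 1
  · rw [if_pos hlt]
    have hIE : l ∈ insert i (Epi π i) := by
      by_cases hne : l = i
      · rw [hne]; exact Finset.mem_insert_self i _
      · apply Finset.mem_insert_of_mem
        rw [mem_Epi]
        have h1 : (π l : ℕ) ≠ (π i : ℕ) := fun h => hne (π.injective (Fin.ext h))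
        omega
    by_cases hT : l ∈ T
    · have hmem : l ∈ insert i (Epi π i) ∩ T := Finset.mem_inter.mpr ⟨hIE, hT⟩
      simp [charVec, hT, hmem]
    · have hmem : l ∉ insert i (Epi π i) ∩ T := fun h => hT (Finset.mem_inter.mp h).2
      simp [charVec, hT, hmem]
  · rw [if_neg hlt]
    have hIE : l ∉ insert i (Epi π i) := by
      intro h
      rcases Finset.mem_insert.mp h with h | h
      · rw [h] at hlt; omega
      · rw [mem_Epi] at h; omega
    have hmem : l ∉ insert i (Epi π i) ∩ T := fun h => hIE (Finset.mem_inter.mp h).1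
    simp [charVec, hmem]

lemma pointwise {n : ℕ} (v : (Fin n → Fin 2) → Fin 2) (π : Equiv.Perm (Fin n)) (i : Fin n)
    (T : Finset (Fin n)) :
    (((vbar v π (charVec T) (π i) : ℕ) : ℝ) - ((vbot v π (charVec T) (π i) : ℕ) : ℝ)) -
      (((vbar v π (charVec T) ((π i : ℕ) + 1) : ℕ) : ℝ) -
        ((vbot v π (charVec T) ((π i : ℕ) + 1) : ℕ) : ℝ))
    = ((v (charVec (insert i (gset π i T))) : ℕ) : ℝ)
      - ((v (charVec (gset π i T)) : ℕ) : ℝ) := by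
  unfold vbar vbot gset
  rw [fa, fb, fc, fd]
  by_cases hiT : i ∈ T
  · rw [if_pos hiT]
    have h1 : insert i (Epi π i) ∩ T = insert i (Epi π i ∩ T) := by
      ext l
      simp only [Finset.mem_insert, Finset.mem_inter]
      constructor
      · rintro ⟨h | h, hT⟩
        · exact Or.inl h
        · exact Or.inr ⟨h, hT⟩
      · rintro (h | ⟨h1, h2⟩)
        · exact ⟨Or.inl h, h ▸ hiT⟩
        · exact ⟨Or.inr h1, h2⟩
    have h2 : insert i (Epi π i ∩ T) ∪ Rpi π i = insert i ((Epi π i ∩ T) ∪ Rpi π i) :=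
      Finset.insert_union _ _ _
    rw [h1, h2]
    ring
  · rw [if_neg hiT]
    have h1 : insert i (Epi π i) ∩ T = Epi π i ∩ T := by
      ext l
      simp only [Finset.mem_insert, Finset.mem_inter]
      constructor
      · rintro ⟨h | h, hT⟩
        · exact absurd (h ▸ hT) hiT
        · exact ⟨h, hT⟩
      · rintro ⟨h1, h2⟩
        exact ⟨Or.inr h1, h2⟩
    rw [h1]
    ring

lemma charVec_filter {n : ℕ} (T : Finset (Fin n)) :
    univ.filter (fun l => charVec T l = 1) = T := by
  ext l
  by_cases hT : l ∈ T <;> simp [charVec, hT]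

lemma charVec_bijective {n : ℕ} :
    Function.Bijective (charVec : Finset (Fin n) → (Fin n → Fin 2)) := by
  rw [Fintype.bijective_iff_injective_and_card]
  constructor
  · intro S T h
    have h1 : univ.filter (fun l => charVec S l = 1) = univ.filter (fun l => charVec T l = 1) := by
      rw [h]
    rwa [charVec_filter, charVec_filter] at h1
  · simp [Fintype.card_finset]
lemma perm_count' {n : ℕ} (i : Fin n) (E : Finset (Fin n)) (hiE : i ∉ E) :
    ((univ : Finset (Equiv.Perm (Fin n))).filter (fun π => Epi π i = E)).card
    = E.card.factorial * (n - 1 - E.card).factorial :=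
  perm_count i E hiE

lemma main_aux {n : ℕ} (i : Fin n) (D : Finset (Fin n) → ℝ) (q : ℕ → ℝ)
    (hq1 : ∑ k ∈ range (n+1), (n.choose k : ℝ) * q k = 1) :
    ∑ π : Equiv.Perm (Fin n), ∑ T : Finset (Fin n), q T.card * D (gset π i T)
    = ∑ S ∈ ((univ : Finset (Fin n)).erase i).powerset,
        (S.card.factorial : ℝ) * ((n - 1 - S.card).factorial : ℝ) * D S := by
  have hn : 0 < n := i.pos
  have hUcard : ((univ : Finset (Fin n)).erase i).card = n - 1 := by
    rw [Finset.card_erase_of_mem (Finset.mem_univ i), Finset.card_univ, Fintype.card_fin]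
  -- step 1 : group the permutation sum by the fibers of Epi
  have hmaps : ∀ π ∈ (univ : Finset (Equiv.Perm (Fin n))),
      Epi π i ∈ ((univ : Finset (Fin n)).erase i).powerset := by
    intro π _
    rw [Finset.mem_powerset]
    intro l hl
    rw [mem_Epi] at hl
    exact Finset.mem_erase.mpr ⟨fun h => by rw [h] at hl; omega, Finset.mem_univ l⟩
  have step1 : ∑ π : Equiv.Perm (Fin n), ∑ T : Finset (Fin n), q T.card * D (gset π i T)
      = ∑ E ∈ ((univ : Finset (Fin n)).erase i).powerset,
          ((E.card.factorial * (n - 1 - E.card).factorial : ℕ) : ℝ) *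
            ∑ T : Finset (Fin n), q T.card *
              D (if i ∈ T then E ∩ T else (E ∩ T) ∪ (((univ : Finset (Fin n)).erase i) \ E)) := by
    have h0 : ∑ π : Equiv.Perm (Fin n), ∑ T : Finset (Fin n), q T.card * D (gset π i T)
        = ∑ π : Equiv.Perm (Fin n), (fun E => ∑ T : Finset (Fin n), q T.card *
            D (if i ∈ T then E ∩ T else (E ∩ T) ∪ (((univ : Finset (Fin n)).erase i) \ E)))
              (Epi π i) := by
      apply Finset.sum_congr rfl
      intro π _
      apply Finset.sum_congr rfl
      intro T _
      rfl
    rw [h0, ← Finset.sum_fiberwise_of_maps_to' hmaps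
      (fun E => ∑ T : Finset (Fin n), q T.card *
        D (if i ∈ T then E ∩ T else (E ∩ T) ∪ (((univ : Finset (Fin n)).erase i) \ E)))]
    apply Finset.sum_congr rfl
    intro E hE
    rw [Finset.sum_const, nsmul_eq_mul]
    have hiE : i ∉ E := fun h => (Finset.mem_erase.mp (Finset.mem_powerset.mp hE h)).1 rfl
    rw [perm_count' i E hiE]
  rw [step1]
  -- step 2 : compute the inner T-sum for each E
  have step2 : ∀ E ∈ ((univ : Finset (Fin n)).erase i).powerset,
      (∑ T : Finset (Fin n), q T.card *
        D (if i ∈ T then E ∩ T else (E ∩ T) ∪ (((univ : Finset (Fin n)).erase i) \ E)))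
      = ∑ A ∈ E.powerset,
          ((∑ t ∈ range ((((univ : Finset (Fin n)).erase i) \ E).card + 1),
              (((((univ : Finset (Fin n)).erase i) \ E).card.choose t : ℝ)) * q (A.card + t))
                * D (A ∪ (((univ : Finset (Fin n)).erase i) \ E))
          + (∑ t ∈ range ((((univ : Finset (Fin n)).erase i) \ E).card + 1),
              (((((univ : Finset (Fin n)).erase i) \ E).card.choose t : ℝ)) * q (A.card + t + 1))
                * D A) := by
    intro E hE
    have hEU : E ⊆ (univ : Finset (Fin n)).erase i := Finset.mem_powerset.mp hE
    have hiE : i ∉ E := fun h => (Finset.mem_erase.mp (hEU h)).1 rfl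
    have hiR : i ∉ ((univ : Finset (Fin n)).erase i) \ E :=
      fun h => (Finset.mem_erase.mp (Finset.mem_sdiff.mp h).1).1 rfl
    have hdisj : Disjoint E (((univ : Finset (Fin n)).erase i) \ E) := Finset.disjoint_sdiff
    have hiER : i ∉ E ∪ (((univ : Finset (Fin n)).erase i) \ E) := by
      intro h
      rcases Finset.mem_union.mp h with h | h
      · exact hiE h
      · exact hiR h
    have huniv : (univ : Finset (Finset (Fin n)))
        = (insert i (E ∪ (((univ : Finset (Fin n)).erase i) \ E))).powerset := by
      rw [Finset.union_sdiff_of_subset hEU, Finset.insert_erase (Finset.mem_univ i),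
        Finset.powerset_univ]
    conv_lhs => rw [huniv]
    rw [Finset.sum_powerset_insert hiER,
      sum_powerset_union_disj E _ hdisj
        (fun T => q T.card * D (if i ∈ T then E ∩ T else (E ∩ T) ∪ (((univ : Finset (Fin n)).erase i) \ E))),
      sum_powerset_union_disj E _ hdisj
        (fun T => q (insert i T).card * D (if i ∈ insert i T then E ∩ insert i T else (E ∩ insert i T) ∪ (((univ : Finset (Fin n)).erase i) \ E))),
      ← Finset.sum_add_distrib]
    apply Finset.sum_congr rfl
    intro A hA
    rw [← Finset.sum_add_distrib]
    have hAE : A ⊆ E := Finset.mem_powerset.mp hA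
    have hstep : ∀ B ∈ ((((univ : Finset (Fin n)).erase i) \ E)).powerset,
        (q (A ∪ B).card * D (if i ∈ A ∪ B then E ∩ (A ∪ B) else (E ∩ (A ∪ B)) ∪ (((univ : Finset (Fin n)).erase i) \ E))
         + q (insert i (A ∪ B)).card * D (if i ∈ insert i (A ∪ B) then E ∩ insert i (A ∪ B) else (E ∩ insert i (A ∪ B)) ∪ (((univ : Finset (Fin n)).erase i) \ E)))
        = (fun b => q (A.card + b)) B.card * D (A ∪ (((univ : Finset (Fin n)).erase i) \ E))
          + (fun b => q (A.card + b + 1)) B.card * D A := by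
      intro B hB
      have hBR : B ⊆ ((univ : Finset (Fin n)).erase i) \ E := Finset.mem_powerset.mp hB
      have hdAB : Disjoint A B := hdisj.mono hAE hBR
      have hiAB : i ∉ A ∪ B := by
        intro h
        rcases Finset.mem_union.mp h with h | h
        · exact hiE (hAE h)
        · exact hiR (hBR h)
      have hcard1 : (A ∪ B).card = A.card + B.card := Finset.card_union_of_disjoint hdAB
      have hcard2 : (insert i (A ∪ B)).card = A.card + B.card + 1 := by
        rw [Finset.card_insert_of_notMem hiAB, hcard1]
      have hEAB : E ∩ (A ∪ B) = A := by
        ext l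
        simp only [Finset.mem_inter, Finset.mem_union]
        constructor
        · rintro ⟨hlE, hl | hl⟩
          · exact hl
          · exact absurd hlE (Finset.mem_sdiff.mp (hBR hl)).2
        · intro hl
          exact ⟨hAE hl, Or.inl hl⟩
      have hEiAB : E ∩ insert i (A ∪ B) = A := by
        rw [Finset.inter_comm, Finset.insert_inter_of_notMem hiE, Finset.inter_comm, hEAB]
      rw [if_neg hiAB, if_pos (Finset.mem_insert_self i _), hEAB, hEiAB, hcard1, hcard2]
    rw [Finset.sum_congr rfl hstep, Finset.sum_add_distrib, ← Finset.sum_mul, ← Finset.sum_mul,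
      sum_pow_card ((((univ : Finset (Fin n)).erase i) \ E)) (fun b => q (A.card + b)),
      sum_pow_card ((((univ : Finset (Fin n)).erase i) \ E)) (fun b => q (A.card + b + 1))]
  rw [Finset.sum_congr rfl (fun E hE => by rw [step2 E hE])]
  set U : Finset (Fin n) := (univ : Finset (Fin n)).erase i with hUdef
  have hsplit : ∑ E ∈ U.powerset, ((E.card.factorial * (n - 1 - E.card).factorial : ℕ) : ℝ) *
        (∑ A ∈ E.powerset,
          ((∑ t ∈ range ((U \ E).card + 1), (((U \ E).card.choose t : ℝ)) * q (A.card + t)) * D (A ∪ (U \ E))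
          + (∑ t ∈ range ((U \ E).card + 1), (((U \ E).card.choose t : ℝ)) * q (A.card + t + 1)) * D A))
      = (∑ E ∈ U.powerset, ∑ A ∈ E.powerset, ((E.card.factorial * (n - 1 - E.card).factorial : ℕ) : ℝ) *
            ((∑ t ∈ range ((U \ E).card + 1), (((U \ E).card.choose t : ℝ)) * q (A.card + t)) * D (A ∪ (U \ E))))
        + (∑ E ∈ U.powerset, ∑ A ∈ E.powerset, ((E.card.factorial * (n - 1 - E.card).factorial : ℕ) : ℝ) *
            ((∑ t ∈ range ((U \ E).card + 1), (((U \ E).card.choose t : ℝ)) * q (A.card + t + 1)) * D A)) := by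
    rw [← Finset.sum_add_distrib]
    apply Finset.sum_congr rfl
    intro E _
    rw [← Finset.sum_add_distrib, Finset.mul_sum]
    apply Finset.sum_congr rfl
    intro A _
    ring
  rw [hsplit]
  have hSig2 : (∑ E ∈ U.powerset, ∑ A ∈ E.powerset, ((E.card.factorial * (n - 1 - E.card).factorial : ℕ) : ℝ) *
        ((∑ t ∈ range ((U \ E).card + 1), (((U \ E).card.choose t : ℝ)) * q (A.card + t)) * D (A ∪ (U \ E))))
      = ∑ S ∈ U.powerset, ∑ R' ∈ S.powerset, (((U \ R').card.factorial * (n - 1 - (U \ R').card).factorial : ℕ) : ℝ) *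
        ((∑ t ∈ range ((U \ (U \ R')).card + 1), (((U \ (U \ R')).card.choose t : ℝ)) * q ((S \ R').card + t)) * D ((S \ R') ∪ (U \ (U \ R')))) :=
    swap_powerset2 U (fun E A => ((E.card.factorial * (n - 1 - E.card).factorial : ℕ) : ℝ) *
        ((∑ t ∈ range ((U \ E).card + 1), (((U \ E).card.choose t : ℝ)) * q (A.card + t)) * D (A ∪ (U \ E))))
  have hSig2' : (∑ S ∈ U.powerset, ∑ R' ∈ S.powerset, (((U \ R').card.factorial * (n - 1 - (U \ R').card).factorial : ℕ) : ℝ) *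
        ((∑ t ∈ range ((U \ (U \ R')).card + 1), (((U \ (U \ R')).card.choose t : ℝ)) * q ((S \ R').card + t)) * D ((S \ R') ∪ (U \ (U \ R')))))
      = ∑ S ∈ U.powerset,
          (∑ m ∈ range (S.card + 1), (S.card.choose m : ℝ) * ((n - 1 - m).factorial : ℝ) * (m.factorial : ℝ) *
            ∑ t ∈ range (m + 1), ((m.choose t) : ℝ) * q (S.card - m + t)) * D S := by
    apply Finset.sum_congr rfl
    intro S hS
    have hSU : S ⊆ U := Finset.mem_powerset.mp hS
    have inner : ∀ R' ∈ S.powerset,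
        (((U \ R').card.factorial * (n - 1 - (U \ R').card).factorial : ℕ) : ℝ) *
          ((∑ t ∈ range ((U \ (U \ R')).card + 1), (((U \ (U \ R')).card.choose t : ℝ)) * q ((S \ R').card + t)) * D ((S \ R') ∪ (U \ (U \ R'))))
        = (((n - 1 - R'.card).factorial : ℝ) * (R'.card.factorial : ℝ) *
            ∑ t ∈ range (R'.card + 1), ((R'.card.choose t) : ℝ) * q (S.card - R'.card + t)) * D S := by
      intro R' hR'
      have hR'S : R' ⊆ S := Finset.mem_powerset.mp hR'
      have hR'U : R' ⊆ U := hR'S.trans hSU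
      have h1 : U \ (U \ R') = R' := Finset.sdiff_sdiff_eq_self hR'U
      have h2 : (S \ R') ∪ R' = S := Finset.sdiff_union_of_subset hR'S
      have hmU : R'.card ≤ n - 1 := by
        have := Finset.card_le_card hR'U
        omega
      have h3 : (U \ R').card = n - 1 - R'.card := by
        rw [Finset.card_sdiff_of_subset hR'U, hUcard]
      have h4 : n - 1 - (U \ R').card = R'.card := by
        rw [h3]
        omega
      have h5 : (S \ R').card = S.card - R'.card := Finset.card_sdiff_of_subset hR'S
      rw [h1, h2, h4, h3, h5]
      push_cast
      ring
    rw [Finset.sum_congr rfl inner,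
      sum_pow_card S (fun m => (((n - 1 - m).factorial : ℝ) * (m.factorial : ℝ) *
        ∑ t ∈ range (m + 1), ((m.choose t) : ℝ) * q (S.card - m + t)) * D S),
      Finset.sum_mul]
    apply Finset.sum_congr rfl
    intro m _
    ring
  have hSig1 : (∑ E ∈ U.powerset, ∑ A ∈ E.powerset, ((E.card.factorial * (n - 1 - E.card).factorial : ℕ) : ℝ) *
        ((∑ t ∈ range ((U \ E).card + 1), (((U \ E).card.choose t : ℝ)) * q (A.card + t + 1)) * D A))
      = ∑ A ∈ U.powerset, ∑ D' ∈ (U \ A).powerset, (((A ∪ D').card.factorial * (n - 1 - (A ∪ D').card).factorial : ℕ) : ℝ) *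
        ((∑ t ∈ range ((U \ (A ∪ D')).card + 1), (((U \ (A ∪ D')).card.choose t : ℝ)) * q (A.card + t + 1)) * D A) :=
    swap_powerset1 U (fun E A => ((E.card.factorial * (n - 1 - E.card).factorial : ℕ) : ℝ) *
        ((∑ t ∈ range ((U \ E).card + 1), (((U \ E).card.choose t : ℝ)) * q (A.card + t + 1)) * D A))
  have hSig1' : (∑ A ∈ U.powerset, ∑ D' ∈ (U \ A).powerset, (((A ∪ D').card.factorial * (n - 1 - (A ∪ D').card).factorial : ℕ) : ℝ) *
        ((∑ t ∈ range ((U \ (A ∪ D')).card + 1), (((U \ (A ∪ D')).card.choose t : ℝ)) * q (A.card + t + 1)) * D A))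
      = ∑ A ∈ U.powerset,
          (∑ j ∈ range (n - 1 - A.card + 1), ((n - 1 - A.card).choose j : ℝ) * ((A.card + j).factorial : ℝ) * ((n - 1 - A.card - j).factorial : ℝ) *
            ∑ t ∈ range (n - 1 - A.card - j + 1), (((n - 1 - A.card - j).choose t) : ℝ) * q (A.card + 1 + t)) * D A := by
    apply Finset.sum_congr rfl
    intro A hA
    have hAU : A ⊆ U := Finset.mem_powerset.mp hA
    have inner : ∀ D' ∈ (U \ A).powerset,
        (((A ∪ D').card.factorial * (n - 1 - (A ∪ D').card).factorial : ℕ) : ℝ) *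
          ((∑ t ∈ range ((U \ (A ∪ D')).card + 1), (((U \ (A ∪ D')).card.choose t : ℝ)) * q (A.card + t + 1)) * D A)
        = (((A.card + D'.card).factorial : ℝ) * ((n - 1 - A.card - D'.card).factorial : ℝ) *
            ∑ t ∈ range (n - 1 - A.card - D'.card + 1), (((n - 1 - A.card - D'.card).choose t) : ℝ) * q (A.card + 1 + t)) * D A := by
      intro D' hD'
      have hD'R : D' ⊆ U \ A := Finset.mem_powerset.mp hD'
      have hdAD : Disjoint A D' := Finset.disjoint_sdiff.mono_right hD'R
      have hsub : A ∪ D' ⊆ U := Finset.union_subset hAU (hD'R.trans Finset.sdiff_subset)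
      have hc1 : (A ∪ D').card = A.card + D'.card := Finset.card_union_of_disjoint hdAD
      have hc2 : (U \ (A ∪ D')).card = n - 1 - A.card - D'.card := by
        rw [Finset.card_sdiff_of_subset hsub, hUcard, hc1]
        omega
      have hc3 : n - 1 - (A ∪ D').card = n - 1 - A.card - D'.card := by
        rw [hc1]
        omega
      rw [hc3, hc2, hc1]
      have hq' : ∀ t ∈ range (n - 1 - A.card - D'.card + 1),
          (((n - 1 - A.card - D'.card).choose t : ℝ)) * q (A.card + t + 1)
          = (((n - 1 - A.card - D'.card).choose t : ℝ)) * q (A.card + 1 + t) := by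
        intro t _
        rw [show A.card + t + 1 = A.card + 1 + t by omega]
      rw [Finset.sum_congr rfl hq']
      push_cast
      ring
    rw [Finset.sum_congr rfl inner,
      sum_pow_card (U \ A) (fun j => (((A.card + j).factorial : ℝ) * ((n - 1 - A.card - j).factorial : ℝ) *
        ∑ t ∈ range (n - 1 - A.card - j + 1), (((n - 1 - A.card - j).choose t) : ℝ) * q (A.card + 1 + t)) * D A),
      show (U \ A).card = n - 1 - A.card by rw [Finset.card_sdiff_of_subset hAU, hUcard],
      Finset.sum_mul]
    apply Finset.sum_congr rfl
    intro j _
    ring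
  rw [hSig2, hSig2', hSig1, hSig1', ← Finset.sum_add_distrib]
  apply Finset.sum_congr rfl
  intro S hS
  have hSU : S ⊆ U := Finset.mem_powerset.mp hS
  have hScard : S.card ≤ n - 1 := by
    have := Finset.card_le_card hSU
    omega
  have hkey := key (n - 1) S.card hScard q
  rw [show n - 1 + 2 = n + 1 by omega, show n - 1 + 1 = n by omega, hq1, mul_one] at hkey
  calc (∑ m ∈ range (S.card + 1), (S.card.choose m : ℝ) * ((n - 1 - m).factorial : ℝ) * (m.factorial : ℝ) *
            ∑ t ∈ range (m + 1), ((m.choose t) : ℝ) * q (S.card - m + t)) * D S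
        + (∑ j ∈ range (n - 1 - S.card + 1), ((n - 1 - S.card).choose j : ℝ) * ((S.card + j).factorial : ℝ) * ((n - 1 - S.card - j).factorial : ℝ) *
            ∑ t ∈ range (n - 1 - S.card - j + 1), (((n - 1 - S.card - j).choose t) : ℝ) * q (S.card + 1 + t)) * D S
      = ((∑ j ∈ range (n - 1 - S.card + 1), ((n - 1 - S.card).choose j : ℝ) * ((S.card + j).factorial : ℝ) * ((n - 1 - S.card - j).factorial : ℝ) *
            ∑ t ∈ range (n - 1 - S.card - j + 1), (((n - 1 - S.card - j).choose t) : ℝ) * q (S.card + 1 + t))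
        + (∑ m ∈ range (S.card + 1), (S.card.choose m : ℝ) * ((n - 1 - m).factorial : ℝ) * (m.factorial : ℝ) *
            ∑ t ∈ range (m + 1), ((m.choose t) : ℝ) * q (S.card - m + t))) * D S := by ring
    _ = ((S.card.factorial : ℝ) * ((n - 1 - S.card).factorial : ℝ)) * D S := by rw [hkey]
    _ = (S.card.factorial : ℝ) * ((n - 1 - S.card).factorial : ℝ) * D S := by ring

/-- Theorem 4.1 (main theorem): for a monotone surjective `(2,2)` game (a simple game)
and any probability distribution `p` on the vote vectors that only depends on the number
of "yes"-votes, the Shapley-Shubik index of player `i` equals the expected probability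
of `i` being pivotal in the roll-call model. -/
theorem shapley_shubik_roll_call {n : ℕ} (v : (Fin n → Fin 2) → Fin 2)
    (hmono : Monotone v) (hsurj : Function.Surjective v)
    (p : (Fin n → Fin 2) → ℝ)
    (hanon : ∀ a b : Fin n → Fin 2,
      (Finset.univ.filter (fun l => a l = 1)).card =
        (Finset.univ.filter (fun l => b l = 1)).card → p a = p b)
    (hpos : ∀ a, 0 ≤ p a) (hsum : ∑ a : Fin n → Fin 2, p a = 1) (i : Fin n) :
    (1 / (n.factorial : ℝ)) *
        ∑ S ∈ (Finset.univ : Finset (Finset (Fin n))).filter (fun S => i ∉ S),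
          (S.card.factorial : ℝ) * ((n - 1 - S.card).factorial : ℝ) *
            (((v (charVec (insert i S)) : ℕ) : ℝ) - ((v (charVec S) : ℕ) : ℝ)) =
      (1 / (n.factorial : ℝ)) *
        ∑ π : Equiv.Perm (Fin n), ∑ a : Fin n → Fin 2,
          p a *
            ((((vbar v π a (π i) : ℕ) : ℝ) - ((vbot v π a (π i) : ℕ) : ℝ)) -
              (((vbar v π a ((π i : ℕ) + 1) : ℕ) : ℝ) -
                ((vbot v π a ((π i : ℕ) + 1) : ℕ) : ℝ))) := by
  have hn : 0 < n := i.pos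
  congr 1
  set q : ℕ → ℝ := fun k => p (charVec (univ.filter (fun m : Fin n => (m : ℕ) < k))) with hqdef
  have hpq : ∀ T : Finset (Fin n), p (charVec T) = q T.card := by
    intro T
    apply hanon
    rw [charVec_filter, charVec_filter, card_filter_lt n T.card (by
      have h := Finset.card_le_univ T
      simpa using h)]
  have hq1 : ∑ k ∈ range (n+1), (n.choose k : ℝ) * q k = 1 := by
    rw [← hsum,
      ← Fintype.sum_bijective charVec charVec_bijective (fun T => q T.card) p
        (fun T => (hpq T).symm)]
    have h := sum_pow_card (univ : Finset (Fin n)) q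
    rw [Finset.powerset_univ, Finset.card_univ, Fintype.card_fin] at h
    exact h.symm
  have hres : ∀ π : Equiv.Perm (Fin n),
      (∑ a : Fin n → Fin 2, p a *
        ((((vbar v π a (π i) : ℕ) : ℝ) - ((vbot v π a (π i) : ℕ) : ℝ)) -
          (((vbar v π a ((π i : ℕ) + 1) : ℕ) : ℝ) -
            ((vbot v π a ((π i : ℕ) + 1) : ℕ) : ℝ))))
      = ∑ T : Finset (Fin n), q T.card *
          (((v (charVec (insert i (gset π i T))) : ℕ) : ℝ)
            - ((v (charVec (gset π i T)) : ℕ) : ℝ)) := by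
    intro π
    exact (Fintype.sum_bijective charVec charVec_bijective _ _
      (fun T => by rw [hpq T, pointwise v π i T])).symm
  have hfilter : (univ : Finset (Finset (Fin n))).filter (fun S => i ∉ S)
      = ((univ : Finset (Fin n)).erase i).powerset := by
    ext S
    simp [Finset.mem_powerset, Finset.subset_erase]
  rw [hfilter]
  have hmain := main_aux i
    (fun S => ((v (charVec (insert i S)) : ℕ) : ℝ) - ((v (charVec S) : ℕ) : ℝ)) q hq1
  calc ∑ S ∈ ((univ : Finset (Fin n)).erase i).powerset,
        (S.card.factorial : ℝ) * ((n - 1 - S.card).factorial : ℝ) *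
          (((v (charVec (insert i S)) : ℕ) : ℝ) - ((v (charVec S) : ℕ) : ℝ))
      = ∑ π : Equiv.Perm (Fin n), ∑ T : Finset (Fin n), q T.card *
          (((v (charVec (insert i (gset π i T))) : ℕ) : ℝ)
            - ((v (charVec (gset π i T)) : ℕ) : ℝ)) := hmain.symm
    _ = ∑ π : Equiv.Perm (Fin n), ∑ a : Fin n → Fin 2, p a *
          ((((vbar v π a (π i) : ℕ) : ℝ) - ((vbot v π a (π i) : ℕ) : ℝ)) -
            (((vbar v π a ((π i : ℕ) + 1) : ℕ) : ℝ) -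
              ((vbot v π a ((π i : ℕ) + 1) : ℕ) : ℝ))) :=
      Finset.sum_congr rfl (fun π _ => (hres π).symm)
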